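/- Let 0 ≤ m < n and write ȳ_j = 1/y_j. Then det[ (1−t) / ((1−x_i y_j)(1−t x_i y_j)(1−x_i ȳ_j)(1−t x_i ȳ_j)) ]_{1≤i,j≤n} = ( ∏_{m+1≤i<j≤n} (x_i − x_j) / ∏_{i=m+1}^{n} (1−t x_i^2) ) · det[ 𝒰_{i,j} ]_{1≤i,j≤n}, where 𝒰_{i,j} = (1−t)/((1−x_i y_j)(1−t x_i y_j)(1−x_i ȳ_j)(1−t x_i ȳ_j)) for 1 ≤ i ≤ m, and 𝒰_{i,j} = Σ_{k=0}^{∞} (1−t^{k+1}) h_{k+i−n}(x_i, x_{i+1},…,x_n) · (y_j^{k+1} − ȳ_j^{k+1})/(y_j − ȳ_j) for m+1 ≤ i ≤ n, as an identity of formal power series in x_1,…,x_n whose coefficients are rational functions of y_1,…,y_n and t. -/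

import Mathlib

noncomputable section

open scoped BigOperators

/-- The complete homogeneous symmetric polynomial `h_k(z₁,…,z_r)`, as a sum of all
monomials of total degree `k`. -/
def hsym {R : Type*} [CommSemiring R] (r k : ℕ) (z : Fin r → R) : R :=
  ∑ d ∈ Finset.Nat.antidiagonalTuple r k, ∏ i : Fin r, z i ^ d i

def hL : ℕ → List ℂ → ℂ
  | 0, _ => 1
  | (_+1), [] => 0
  | (k+1), (a :: s) => hL (k+1) s + a * hL k (a :: s)
termination_by k s => (k, s.length)

@[simp] lemma hL_zero (L : List ℂ) : hL 0 L = 1 := by cases L <;> simp [hL]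
@[simp] lemma hL_nil (k : ℕ) : hL (k+1) [] = 0 := by simp [hL]
lemma hL_cons (k : ℕ) (a : ℂ) (L : List ℂ) :
    hL (k+1) (a :: L) = hL (k+1) L + a * hL k (a :: L) := by rw [hL]


lemma hL_sub : ∀ (k : ℕ) (a b : ℂ) (L : List ℂ),
    hL (k+1) (b :: L) - hL (k+1) (a :: L) = (b - a) * hL k (a :: b :: L) := by
  intro k
  induction k with
  | zero => intro a b L; rw [hL_cons, hL_cons]; simp
  | succ k ih =>
    intro a b L
    rw [hL_cons (k+1) b L, hL_cons (k+1) a L, hL_cons k a (b :: L)]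
    linear_combination a * ih a b L

lemma hL_swap (k : ℕ) (a b : ℂ) (L : List ℂ) : hL k (a :: b :: L) = hL k (b :: a :: L) := by
  induction k with
  | zero => simp
  | succ k ih =>
    rw [hL_cons k a (b :: L), hL_cons k b (a :: L)]
    linear_combination hL_sub k a b L + b * ih

lemma hL_perm (k : ℕ) {L₁ L₂ : List ℂ} (h : L₁.Perm L₂) : hL k L₁ = hL k L₂ := by
  induction h generalizing k with
  | nil => rfl
  | cons a h ih =>
    induction k with
    | zero => simp
    | succ k ihk => rw [hL_cons, hL_cons, ih, ihk]
  | swap a b L =>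
    exact hL_swap k b a L
  | trans h₁ h₂ ih₁ ih₂ => rw [ih₁, ih₂]

lemma hL_singleton (k : ℕ) (a : ℂ) : hL k [a] = a ^ k := by
  induction k with
  | zero => simp
  | succ k ih => rw [hL_cons, hL_nil, ih]; ring

lemma hL_cons_expand (k : ℕ) (a : ℂ) (L : List ℂ) :
    hL k (a :: L) = ∑ p ∈ Finset.HasAntidiagonal.antidiagonal k, a ^ p.1 * hL p.2 L := by
  induction k with
  | zero => simp
  | succ k ih =>
    rw [hL_cons, ih, Finset.Nat.sum_antidiagonal_succ]
    simp only [pow_zero, one_mul, Finset.mul_sum]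
    congr 1
    refine Finset.sum_congr rfl fun p hp => ?_
    ring

lemma hsym_succ (r k : ℕ) (x : Fin (r+1) → ℂ) :
    hsym (r+1) k x = ∑ p ∈ Finset.HasAntidiagonal.antidiagonal k, x 0 ^ p.1 * hsym r p.2 (x ∘ Fin.succ) := by
  unfold hsym
  simp_rw [Finset.mul_sum]
  rw [Finset.sum_sigma']
  refine (Finset.sum_nbij' (i := fun q => Fin.cons q.1.1 q.2)
    (j := fun f => ⟨(f 0, ∑ i : Fin r, f i.succ), f ∘ Fin.succ⟩) ?_ ?_ ?_ ?_ ?_).symm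
  · intro f hf
    rw [Finset.mem_sigma] at hf
    obtain ⟨h1, h2⟩ := hf
    rw [Finset.HasAntidiagonal.mem_antidiagonal] at h1
    rw [Finset.Nat.mem_antidiagonalTuple] at h2
    rw [Finset.Nat.mem_antidiagonalTuple, Fin.sum_univ_succ]
    simpa [Fin.cons_zero, Fin.cons_succ, h2] using h1
  · intro q hq
    rw [Finset.Nat.mem_antidiagonalTuple] at hq
    refine Finset.mem_sigma.mpr ⟨Finset.HasAntidiagonal.mem_antidiagonal.mpr ?_, Finset.Nat.mem_antidiagonalTuple.mpr rfl⟩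
    rw [← hq, Fin.sum_univ_succ]
  · intro f hf
    rw [Finset.mem_sigma] at hf
    obtain ⟨h1, h2⟩ := hf
    rw [Finset.Nat.mem_antidiagonalTuple] at h2
    refine Sigma.ext ?_ (heq_of_eq ?_)
    · simp only [Fin.cons_zero]
      refine Prod.ext rfl ?_
      simp only
      simp only [Fin.cons_succ]
      exact h2
    · funext i
      simp [Fin.cons_succ]
  · intro q hq
    exact Fin.cons_self_tail q
  · intro f hf
    rw [Fin.prod_univ_succ]
    simp [Fin.cons_zero, Fin.cons_succ]

lemma hL_ofFn : ∀ (r : ℕ) (x : Fin r → ℂ) (k : ℕ), hL k (List.ofFn x) = hsym r k x := by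
  intro r
  induction r with
  | zero =>
    intro x k
    match k with
    | 0 => simp [hsym]
    | (k+1) => simp [hsym, List.ofFn_zero]
  | succ r ih =>
    intro x k
    rw [List.ofFn_succ, hL_cons_expand, hsym_succ]
    refine Finset.sum_congr rfl fun p hp => ?_
    rw [ih]
    rfl

def hset (s : Finset ℂ) (k : ℕ) : ℂ := hL k s.toList

@[simp] lemma hset_zero (s : Finset ℂ) : hset s 0 = 1 := by simp [hset]

lemma hset_erase {a : ℂ} {s : Finset ℂ} (ha : a ∈ s) (k : ℕ) :
    hset s (k+1) = hset (s.erase a) (k+1) + a * hset s k := by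
  have hperm : ∀ j : ℕ, hL j s.toList = hL j (a :: (s.erase a).toList) := by
    intro j
    refine hL_perm j ?_
    rw [← Multiset.coe_eq_coe]
    show (s.toList : Multiset ℂ) = (a ::ₘ ((s.erase a).toList : Multiset ℂ))
    rw [Finset.coe_toList, Finset.coe_toList, Finset.erase_val]
    exact (Multiset.cons_erase (by exact_mod_cast ha : a ∈ s.val)).symm
  rw [hset, hset, hset, hperm (k+1), hperm k, hL_cons]

lemma hset_dd {a b : ℂ} {s : Finset ℂ} (ha : a ∈ s) (hb : b ∈ s) (d : ℕ) :
    hset (s.erase a) (d+1) - hset (s.erase b) (d+1) = (b - a) * hset s d := by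
  have h1 := hset_erase ha d
  have h2 := hset_erase hb d
  linear_combination h2 - h1

def lagSum (s : Finset ℂ) (k : ℕ) : ℂ := ∑ a ∈ s, a ^ k / ∏ b ∈ s.erase a, (a - b)

lemma lag_rec {a b : ℂ} {s : Finset ℂ} (ha : a ∈ s) (hb : b ∈ s) (hab : a ≠ b) (k : ℕ) :
    (b - a) * lagSum s k = lagSum (s.erase a) k - lagSum (s.erase b) k := by
  classical
  set s' := (s.erase a).erase b with hs'
  have hba : b ∈ s.erase a := Finset.mem_erase.mpr ⟨hab.symm, hb⟩
  have hab' : a ∈ s.erase b := Finset.mem_erase.mpr ⟨hab, ha⟩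
  have hs'' : (s.erase b).erase a = s' := by rw [hs', Finset.erase_right_comm]
  have hsub : s' ⊆ s := (Finset.erase_subset _ _).trans (Finset.erase_subset _ _)
  have e1 : lagSum s k = (a ^ k / ∏ d ∈ s.erase a, (a - d)) +
      ((b ^ k / ∏ d ∈ s.erase b, (b - d)) + ∑ c ∈ s', c ^ k / ∏ d ∈ s.erase c, (c - d)) := by
    rw [lagSum, ← Finset.add_sum_erase _ _ ha, ← Finset.add_sum_erase _ _ hba]
  have e2 : lagSum (s.erase a) k = (b ^ k / ∏ d ∈ s', (b - d)) +
      ∑ c ∈ s', c ^ k / ∏ d ∈ (s.erase a).erase c, (c - d) := by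
    rw [lagSum, ← Finset.add_sum_erase _ _ hba, hs']
  have e3 : lagSum (s.erase b) k = (a ^ k / ∏ d ∈ s', (a - d)) +
      ∑ c ∈ s', c ^ k / ∏ d ∈ (s.erase b).erase c, (c - d) := by
    rw [lagSum, ← Finset.add_sum_erase _ _ hab', hs'']
  have key : ∀ c ∈ s', (b - a) * (c ^ k / ∏ d ∈ s.erase c, (c - d)) =
      c ^ k / ∏ d ∈ (s.erase a).erase c, (c - d) -
        c ^ k / ∏ d ∈ (s.erase b).erase c, (c - d) := by
    intro c hc
    have hcb : c ≠ b := (Finset.mem_erase.mp hc).1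
    have hca : c ≠ a := (Finset.mem_erase.mp (Finset.mem_erase.mp hc).2).1
    have hcs : c ∈ s := hsub hc
    set T := s'.erase c with hT
    have hQne : (∏ d ∈ T, (c - d)) ≠ 0 := by
      refine Finset.prod_ne_zero_iff.mpr fun d hd => sub_ne_zero.mpr ?_
      exact fun h => (Finset.mem_erase.mp hd).1 h.symm
    have d1 : ∏ d ∈ s.erase c, (c - d) = (c - a) * ((c - b) * ∏ d ∈ T, (c - d)) := by
      rw [← Finset.mul_prod_erase _ _ (show a ∈ s.erase c from
        Finset.mem_erase.mpr ⟨hca.symm, ha⟩), ← Finset.mul_prod_erase _ _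
        (show b ∈ (s.erase c).erase a from Finset.mem_erase.mpr ⟨hab.symm,
          Finset.mem_erase.mpr ⟨hcb.symm, hb⟩⟩)]
      have hTeq : ((s.erase c).erase a).erase b = T := by
        ext d; simp only [hT, hs', Finset.mem_erase]; tauto
      rw [hTeq]
    have d2 : ∏ d ∈ (s.erase a).erase c, (c - d) = (c - b) * ∏ d ∈ T, (c - d) := by
      rw [← Finset.mul_prod_erase _ _ (show b ∈ (s.erase a).erase c from
        Finset.mem_erase.mpr ⟨hcb.symm, hba⟩)]
      have hTeq : ((s.erase a).erase c).erase b = T := by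
        ext d; simp only [hT, hs', Finset.mem_erase]; tauto
      rw [hTeq]
    have d3 : ∏ d ∈ (s.erase b).erase c, (c - d) = (c - a) * ∏ d ∈ T, (c - d) := by
      rw [← Finset.mul_prod_erase _ _ (show a ∈ (s.erase b).erase c from
        Finset.mem_erase.mpr ⟨hca.symm, hab'⟩)]
      have hTeq : ((s.erase b).erase c).erase a = T := by
        ext d; simp only [hT, hs', Finset.mem_erase]; tauto
      rw [hTeq]
    rw [d1, d2, d3]
    have hca' : c - a ≠ 0 := sub_ne_zero.mpr hca
    have hcb' : c - b ≠ 0 := sub_ne_zero.mpr hcb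
    field_simp
    ring
  have hsum : (b - a) * ∑ c ∈ s', c ^ k / ∏ d ∈ s.erase c, (c - d) =
      (∑ c ∈ s', c ^ k / ∏ d ∈ (s.erase a).erase c, (c - d)) -
        ∑ c ∈ s', c ^ k / ∏ d ∈ (s.erase b).erase c, (c - d) := by
    rw [Finset.mul_sum, ← Finset.sum_sub_distrib]
    exact Finset.sum_congr rfl key
  have hPa : (∏ d ∈ s', (a - d)) ≠ 0 := by
    refine Finset.prod_ne_zero_iff.mpr fun d hd => sub_ne_zero.mpr ?_
    have : d ≠ a := (Finset.mem_erase.mp (Finset.mem_erase.mp (hs' ▸ hd)).2).1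
    exact this.symm
  have hPb : (∏ d ∈ s', (b - d)) ≠ 0 := by
    refine Finset.prod_ne_zero_iff.mpr fun d hd => sub_ne_zero.mpr ?_
    exact ((Finset.mem_erase.mp (hs' ▸ hd)).1).symm
  have hfa : (b - a) * (a ^ k / ∏ d ∈ s.erase a, (a - d)) = -(a ^ k / ∏ d ∈ s', (a - d)) := by
    rw [← Finset.mul_prod_erase _ _ hba]
    have hba' : a - b ≠ 0 := sub_ne_zero.mpr hab
    rw [show (s.erase a).erase b = s' from rfl]
    field_simp
    ring
  have hfb : (b - a) * (b ^ k / ∏ d ∈ s.erase b, (b - d)) = b ^ k / ∏ d ∈ s', (b - d) := by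
    rw [← Finset.mul_prod_erase _ _ hab', hs'']
    have hba' : b - a ≠ 0 := sub_ne_zero.mpr hab.symm
    field_simp
  rw [e1, e2, e3]
  linear_combination hfa + hfb + hsum

theorem lag_key (s : Finset ℂ) : ∀ k : ℕ,
    lagSum s k = if s.card ≤ k + 1 then hset s (k + 1 - s.card) else 0 := by
  induction s using Finset.strongInduction with
  | _ s ih =>
    intro k
    rcases Nat.lt_or_ge s.card 2 with hlt | hge
    · interval_cases h : s.card
      · rw [Finset.card_eq_zero.mp h]
        simp [lagSum, hset, hL_nil]
      · obtain ⟨a, rfl⟩ := Finset.card_eq_one.mp h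
        simp [lagSum, hset, hL_singleton]
    · obtain ⟨a, ha, b, hb, hab⟩ := Finset.one_lt_card.mp hge
      have hba' : b - a ≠ 0 := sub_ne_zero.mpr (Ne.symm hab)
      have h1 := ih (s.erase a) (Finset.erase_ssubset ha) k
      have h2 := ih (s.erase b) (Finset.erase_ssubset hb) k
      have hc1 : (s.erase a).card = s.card - 1 := Finset.card_erase_of_mem ha
      have hc2 : (s.erase b).card = s.card - 1 := Finset.card_erase_of_mem hb
      have hrec := lag_rec ha hb hab k
      rw [h1, h2, hc1, hc2] at hrec
      by_cases hck : s.card ≤ k + 1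
      · have he : k + 1 - (s.card - 1) = (k + 1 - s.card) + 1 := by omega
        rw [if_pos (by omega), if_pos (by omega), he, hset_dd ha hb] at hrec
        rw [if_pos hck]
        exact mul_left_cancel₀ hba' hrec
      · by_cases hck2 : s.card = k + 2
        · rw [if_pos (by omega), if_pos (by omega),
            show k + 1 - (s.card - 1) = 0 from by omega, hset_zero, hset_zero, sub_self] at hrec
          rw [if_neg hck]
          exact mul_left_cancel₀ hba' (by rw [hrec, mul_zero])
        · rw [if_neg (by omega), if_neg (by omega), sub_self] at hrec
          rw [if_neg hck]
          exact mul_left_cancel₀ hba' (by rw [hrec, mul_zero])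

lemma hset_image {r : ℕ} (x : Fin r → ℂ) (hx : Function.Injective x) (d : ℕ) :
    hset (Finset.univ.image x) d = hsym r d x := by
  rw [hset, ← hL_ofFn r x d]
  refine hL_perm d ?_
  rw [← Multiset.coe_eq_coe, Finset.coe_toList]
  rw [Finset.image_val, Fin.univ_val_map, Multiset.dedup_eq_self.mpr]
  exact (Multiset.coe_nodup).mpr ((List.nodup_ofFn).mpr hx)

lemma lag_fin (r k : ℕ) (x : Fin r → ℂ) (hx : Function.Injective x) :
    (∑ l : Fin r, x l ^ k / ∏ p ∈ Finset.univ.erase l, (x l - x p)) =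
      if r ≤ k + 1 then hsym r (k + 1 - r) x else 0 := by
  have hcard : (Finset.univ.image x).card = r := by
    rw [Finset.card_image_of_injective _ hx, Finset.card_univ, Fintype.card_fin]
  have := lag_key (Finset.univ.image x) k
  rw [hcard, hset_image x hx] at this
  rw [← this, lagSum, Finset.sum_image (fun a _ b _ h => hx h)]
  refine Finset.sum_congr rfl fun l _ => ?_
  congr 1
  rw [← Finset.image_erase hx, Finset.prod_image]
  intro a ha b hb h
  exact hx h

lemma one_sub_ne_zero {z : ℂ} (h : ‖z‖ < 1) : 1 - z ≠ 0 := by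
  intro hz
  have : z = 1 := by linear_combination -hz
  rw [this] at h
  simp at h

lemma val_eq {x y u t : ℂ} (hyu : y - u ≠ 0) (e1 : 1 - x * y ≠ 0) (e2 : 1 - x * u ≠ 0)
    (e3 : 1 - t * (x * y) ≠ 0) (e4 : 1 - t * (x * u) ≠ 0) :
    y / (y - u) * (1 - x * y)⁻¹ - u / (y - u) * (1 - x * u)⁻¹ -
      (t * y / (y - u) * (1 - t * (x * y))⁻¹ - t * u / (y - u) * (1 - t * (x * u))⁻¹) =
    (1 - t) * (1 - t * x ^ 2 * (y * u)) /
      ((1 - x * y) * (1 - t * (x * y)) * (1 - x * u) * (1 - t * (x * u))) := by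
  simp only [← div_eq_mul_inv]
  rw [div_div, div_div, div_div, div_div, div_sub_div _ _ (mul_ne_zero hyu e1) (mul_ne_zero hyu e2),
    div_sub_div _ _ (mul_ne_zero hyu e3) (mul_ne_zero hyu e4),
    div_sub_div _ _ (mul_ne_zero (mul_ne_zero hyu e1) (mul_ne_zero hyu e2)) (mul_ne_zero (mul_ne_zero hyu e3) (mul_ne_zero hyu e4)),
    div_eq_div_iff (by simp [*]) (by simp [*])]
  ring

lemma geom_row {x y t : ℂ} (hxy : ‖x * y‖ < 1) (hxy' : ‖x * y⁻¹‖ < 1) (ht : ‖t‖ < 1)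
    (hy : y ≠ 0) (hysq : y ^ 2 ≠ 1) :
    HasSum (fun k : ℕ => (1 - t ^ (k + 1)) * x ^ k *
        ((y ^ (k + 1) - (y⁻¹) ^ (k + 1)) / (y - y⁻¹)))
      ((1 - t) * (1 - t * x ^ 2) /
        ((1 - x * y) * (1 - t * (x * y)) * (1 - x * y⁻¹) * (1 - t * (x * y⁻¹)))) := by
  have hyy : y - y⁻¹ ≠ 0 := by
    intro h
    apply hysq
    have : y = y⁻¹ := by linear_combination h
    field_simp at this
    rw [sq]
    linear_combination this
  have htxy : ‖t * (x * y)‖ < 1 := by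
    rw [norm_mul]
    calc ‖t‖ * ‖x * y‖ ≤ 1 * ‖x * y‖ := by
          exact mul_le_mul_of_nonneg_right ht.le (norm_nonneg _)
      _ = ‖x * y‖ := one_mul _
      _ < 1 := hxy
  have htxy' : ‖t * (x * y⁻¹)‖ < 1 := by
    rw [norm_mul]
    calc ‖t‖ * ‖x * y⁻¹‖ ≤ 1 * ‖x * y⁻¹‖ :=
          mul_le_mul_of_nonneg_right ht.le (norm_nonneg _)
      _ = ‖x * y⁻¹‖ := one_mul _
      _ < 1 := hxy'
  have h1 := (hasSum_geometric_of_norm_lt_one hxy).mul_left (y / (y - y⁻¹))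
  have h2 := (hasSum_geometric_of_norm_lt_one hxy').mul_left (y⁻¹ / (y - y⁻¹))
  have h3 := (hasSum_geometric_of_norm_lt_one htxy).mul_left (t * y / (y - y⁻¹))
  have h4 := (hasSum_geometric_of_norm_lt_one htxy').mul_left (t * y⁻¹ / (y - y⁻¹))
  have hcomb := ((h1.sub h2).sub (h3.sub h4))
  have hfun : (fun k : ℕ => (y / (y - y⁻¹) * (x * y) ^ k - y⁻¹ / (y - y⁻¹) * (x * y⁻¹) ^ k) -
      (t * y / (y - y⁻¹) * (t * (x * y)) ^ k - t * y⁻¹ / (y - y⁻¹) * (t * (x * y⁻¹)) ^ k)) =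
      (fun k : ℕ => (1 - t ^ (k + 1)) * x ^ k * ((y ^ (k + 1) - (y⁻¹) ^ (k + 1)) / (y - y⁻¹))) := by
    funext k
    simp only [div_eq_mul_inv, mul_pow, pow_succ]
    ring
  rw [hfun] at hcomb
  convert hcomb using 1
  · exact rfl
  have e1 : (1 : ℂ) - x * y ≠ 0 := one_sub_ne_zero hxy
  have e2 : (1 : ℂ) - x * y⁻¹ ≠ 0 := one_sub_ne_zero hxy'
  have e3 : (1 : ℂ) - t * (x * y) ≠ 0 := one_sub_ne_zero htxy
  have e4 : (1 : ℂ) - t * (x * y⁻¹) ≠ 0 := one_sub_ne_zero htxy'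
  rw [val_eq hyy e1 e2 e3 e4, mul_inv_cancel₀ hy, mul_one]

/-- Row-operation form of the Tsuchiya determinant: for `0 ≤ m < n` and `ȳ = y⁻¹`,
`det[(1-t)/((1-xᵢyⱼ)(1-t xᵢyⱼ)(1-xᵢȳⱼ)(1-t xᵢȳⱼ))]
  = (∏_{m+1≤i<j≤n} (xᵢ-xⱼ) / ∏_{i=m+1}^n (1-t xᵢ²)) · det[𝒰_{ij}]`,
where `𝒰_{ij} = (1-t)/((1-xᵢyⱼ)(1-t xᵢyⱼ)(1-xᵢȳⱼ)(1-t xᵢȳⱼ))` for `i ≤ m` and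
`𝒰_{ij} = Σ_{k≥0} (1-t^{k+1}) h_{k+i-n}(xᵢ,…,xₙ) (yⱼ^{k+1}-ȳⱼ^{k+1})/(yⱼ-ȳⱼ)` for `i > m`
(with `h_d = 0` for `d < 0`).  It is stated here for complex values of the variables in a
domain of convergence. -/
theorem det_row_operations_uturn (m n : ℕ) (hmn : m < n) (x y : Fin n → ℂ) (t : ℂ)
    (hx : ∀ i, ‖x i‖ < 1 / 8) (hy1 : ∀ j, 1 / 2 < ‖y j‖) (hy2 : ∀ j, ‖y j‖ < 2)
    (hysq : ∀ j, (y j) ^ 2 ≠ 1) (ht : ‖t‖ < 1) :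
    (Matrix.of fun i j : Fin n =>
        (1 - t) / ((1 - x i * y j) * (1 - t * (x i * y j)) *
          (1 - x i * (y j)⁻¹) * (1 - t * (x i * (y j)⁻¹)))).det =
      (∏ i : Fin n, ∏ j ∈ Finset.Ioi i, if m ≤ (i : ℕ) then x i - x j else 1) /
          (∏ i ∈ Finset.univ.filter (fun i : Fin n => m ≤ (i : ℕ)), (1 - t * x i ^ 2)) *
        (Matrix.of fun i j : Fin n =>
          if (i : ℕ) < m then
            (1 - t) / ((1 - x i * y j) * (1 - t * (x i * y j)) *
              (1 - x i * (y j)⁻¹) * (1 - t * (x i * (y j)⁻¹)))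
          else
            ∑' k : ℕ,
              if n ≤ k + (i : ℕ) + 1 then
                (1 - t ^ (k + 1)) *
                  hsym (n - (i : ℕ)) (k + (i : ℕ) + 1 - n)
                    (fun a : Fin (n - (i : ℕ)) =>
                      x ⟨(i : ℕ) + (a : ℕ), by have h1 := a.isLt; have h2 := i.isLt; omega⟩) *
                  ((y j ^ (k + 1) - (y j)⁻¹ ^ (k + 1)) / (y j - (y j)⁻¹))
              else 0).det := by
    classical
  -- basic facts
  have hy0 : ∀ j, y j ≠ 0 := fun j => by
    intro h; have := hy1 j; rw [h] at this; simp at this; linarith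
  have hxyn : ∀ i j, ‖x i * y j‖ < 1 := by
    intro i j
    rw [norm_mul]
    nlinarith [hx i, hy2 j, norm_nonneg (x i), norm_nonneg (y j)]
  have hxy'n : ∀ i j, ‖x i * (y j)⁻¹‖ < 1 := by
    intro i j
    rw [norm_mul, norm_inv]
    have h0 : (0:ℝ) < ‖y j‖ := lt_trans (by norm_num) (hy1 j)
    nlinarith [hx i, hy1 j, norm_nonneg (x i), mul_inv_cancel₀ (ne_of_gt h0),
      inv_pos.mpr h0]
  have hd : ∀ i, (1 : ℂ) - t * x i ^ 2 ≠ 0 := by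
    intro i
    refine one_sub_ne_zero ?_
    rw [norm_mul, norm_pow]
    nlinarith [hx i, ht, norm_nonneg (x i), norm_nonneg t]
  set K : Matrix (Fin n) (Fin n) ℂ := Matrix.of fun i j : Fin n =>
    (1 - t) / ((1 - x i * y j) * (1 - t * (x i * y j)) *
      (1 - x i * (y j)⁻¹) * (1 - t * (x i * (y j)⁻¹))) with hK
  set U : Matrix (Fin n) (Fin n) ℂ := Matrix.of fun i j : Fin n =>
    (if (i : ℕ) < m then
      (1 - t) / ((1 - x i * y j) * (1 - t * (x i * y j)) *
        (1 - x i * (y j)⁻¹) * (1 - t * (x i * (y j)⁻¹)))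
    else
      ∑' k : ℕ,
        if n ≤ k + (i : ℕ) + 1 then
          (1 - t ^ (k + 1)) *
            hsym (n - (i : ℕ)) (k + (i : ℕ) + 1 - n)
              (fun a : Fin (n - (i : ℕ)) =>
                x ⟨(i : ℕ) + (a : ℕ), by have h1 := a.isLt; have h2 := i.isLt; omega⟩) *
            ((y j ^ (k + 1) - (y j)⁻¹ ^ (k + 1)) / (y j - (y j)⁻¹))
        else 0) with hU
  set V : ℂ := ∏ i : Fin n, ∏ j ∈ Finset.Ioi i, if m ≤ (i : ℕ) then x i - x j else 1 with hV
  set P : ℂ := ∏ i ∈ Finset.univ.filter (fun i : Fin n => m ≤ (i : ℕ)), (1 - t * x i ^ 2)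
    with hP
  show K.det = V / P * U.det
  by_cases hinj : ∀ i j : Fin n, m ≤ (i : ℕ) → m ≤ (j : ℕ) → x i = x j → i = j
  · -- injective case
    set d : Fin n → ℂ := fun i => if (i : ℕ) < m then 1 else 1 - t * x i ^ 2 with hdd
    set M : Matrix (Fin n) (Fin n) ℂ := Matrix.of fun i j => d i * K i j with hM
    have hdetM : M.det = P * K.det := by
      rw [hM, Matrix.det_mul_column d K]
      congr 1
      rw [hdd, hP, Finset.prod_ite, Finset.prod_const_one, one_mul]
      refine Finset.prod_congr ?_ fun _ _ => rfl
      ext i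
      simp [not_lt]
    set L : Matrix (Fin n) (Fin n) ℂ := Matrix.of fun i l =>
      if (i : ℕ) < m then (if l = i then (1:ℂ) else 0)
      else if (i : ℕ) ≤ (l : ℕ) then
        (∏ p ∈ Finset.univ.filter (fun p : Fin n => (i:ℕ) ≤ (p:ℕ) ∧ p ≠ l), (x l - x p))⁻¹
      else 0 with hL
    have hLtri : L.BlockTriangular id := by
      intro i l hli
      have hli' : (l : ℕ) < (i : ℕ) := hli
      simp only [hL, Matrix.of_apply]
      by_cases him : (i:ℕ) < m
      · rw [if_pos him, if_neg]
        intro h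
        rw [h] at hli'
        omega
      · rw [if_neg him, if_neg (by omega)]
    have hdetL : L.det = V⁻¹ := by
      rw [Matrix.det_of_upperTriangular hLtri, hV, ← Finset.prod_inv_distrib]
      refine Finset.prod_congr rfl fun i _ => ?_
      by_cases him : (i:ℕ) < m
      · simp only [hL, Matrix.of_apply, if_pos him, if_pos rfl]
        rw [show (∏ j ∈ Finset.Ioi i, if m ≤ (i:ℕ) then x i - x j else 1) =
            ∏ j ∈ Finset.Ioi i, (1:ℂ) from Finset.prod_congr rfl fun j _ => if_neg (by omega)]
        simp
      · simp only [hL, Matrix.of_apply, if_neg him, if_pos (le_refl (i:ℕ))]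
        congr 1
        rw [show (∏ j ∈ Finset.Ioi i, if m ≤ (i:ℕ) then x i - x j else 1) =
            ∏ j ∈ Finset.Ioi i, (x i - x j) from Finset.prod_congr rfl fun j _ =>
              if_pos (by omega)]
        refine Finset.prod_congr ?_ fun _ _ => rfl
        ext p
        simp only [Finset.mem_filter, Finset.mem_univ, true_and, Finset.mem_Ioi]
        rw [Fin.lt_def]
        constructor
        · rintro ⟨h1, h2⟩
          have : (p : ℕ) ≠ (i : ℕ) := fun h => h2 (Fin.ext h)
          omega
        · intro h
          exact ⟨le_of_lt h, fun hpi => by rw [hpi] at h; omega⟩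
    have hVne : V ≠ 0 := by
      rw [hV]
      refine Finset.prod_ne_zero_iff.mpr fun i _ => ?_
      refine Finset.prod_ne_zero_iff.mpr fun j hj => ?_
      rw [Finset.mem_Ioi] at hj
      by_cases him : m ≤ (i : ℕ)
      · rw [if_pos him]
        refine sub_ne_zero.mpr fun h => ?_
        have := hinj i j him (by have := hj; rw [Fin.lt_def] at this; omega) h
        rw [this] at hj
        exact lt_irrefl _ hj
      · rw [if_neg him]
        exact one_ne_zero
    have hPne : P ≠ 0 := by
      rw [hP]
      exact Finset.prod_ne_zero_iff.mpr fun i _ => hd i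
    have hULM : U = L * M := by
      ext i j
      rw [Matrix.mul_apply]
      show (if (i : ℕ) < m then _ else _) = _
      by_cases him : (i:ℕ) < m
      · rw [if_pos him]
        have : ∀ l : Fin n, L i l * M l j = if l = i then M l j else 0 := by
          intro l
          simp only [hL, Matrix.of_apply, if_pos him]
          by_cases hli : l = i
          · rw [if_pos hli, if_pos hli, one_mul]
          · rw [if_neg hli, if_neg hli, zero_mul]
        rw [Finset.sum_congr rfl fun l _ => this l, Finset.sum_ite_eq' Finset.univ i
          (fun l => M l j), if_pos (Finset.mem_univ i)]
        show _ = d i * K i j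
        rw [hdd]
        simp only [if_pos him, one_mul]
        rfl
      · rw [if_neg him]
        have hin : (i : ℕ) < n := i.isLt
        set x' : Fin (n - (i:ℕ)) → ℂ :=
          (fun a : Fin (n - (i : ℕ)) =>
            x ⟨(i : ℕ) + (a : ℕ), by have h1 := a.isLt; have h2 := i.isLt; omega⟩) with hx'
        have hx'i : Function.Injective x' := by
          intro a b hab
          have h := hinj _ _ (by simp; omega) (by simp; omega) hab
          rw [Fin.mk.injEq] at h
          exact Fin.ext (by omega)
        have hrowSum : ∀ l : Fin (n - (i:ℕ)),
            HasSum (fun k : ℕ => (1 - t ^ (k+1)) * (x' l) ^ k *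
              ((y j ^ (k + 1) - (y j)⁻¹ ^ (k + 1)) / (y j - (y j)⁻¹)))
            ((1 - t) * (1 - t * (x' l) ^ 2) / ((1 - x' l * y j) * (1 - t * (x' l * y j)) *
              (1 - x' l * (y j)⁻¹) * (1 - t * (x' l * (y j)⁻¹)))) := by
          intro l
          exact geom_row (hxyn _ j) (hxy'n _ j) ht (hy0 j) (hysq j)
        have hkey : ∀ k : ℕ,
            (if n ≤ k + (i : ℕ) + 1 then
              (1 - t ^ (k + 1)) *
                hsym (n - (i : ℕ)) (k + (i : ℕ) + 1 - n) x' *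
                ((y j ^ (k + 1) - (y j)⁻¹ ^ (k + 1)) / (y j - (y j)⁻¹))
            else 0) =
            ∑ l : Fin (n - (i:ℕ)),
              ((x' l) ^ k / ∏ p ∈ Finset.univ.erase l, (x' l - x' p)) *
                ((1 - t ^ (k + 1)) *
                  ((y j ^ (k + 1) - (y j)⁻¹ ^ (k + 1)) / (y j - (y j)⁻¹))) := by
          intro k
          rw [← Finset.sum_mul, lag_fin _ k x' hx'i]
          by_cases hg : n ≤ k + (i:ℕ) + 1
          · rw [if_pos hg, if_pos (by omega : n - (i:ℕ) ≤ k + 1),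
              show k + 1 - (n - (i:ℕ)) = k + (i : ℕ) + 1 - n from by omega]
            ring
          · rw [if_neg hg, if_neg (by omega), zero_mul]
        have hsummable : ∀ l : Fin (n - (i:ℕ)), Summable (fun k : ℕ =>
            ((x' l) ^ k / ∏ p ∈ Finset.univ.erase l, (x' l - x' p)) *
              ((1 - t ^ (k + 1)) *
                ((y j ^ (k + 1) - (y j)⁻¹ ^ (k + 1)) / (y j - (y j)⁻¹)))) := by
          intro l
          refine ((hrowSum l).summable.mul_left
            (∏ p ∈ Finset.univ.erase l, (x' l - x' p))⁻¹).congr fun k => ?_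
          rw [div_eq_mul_inv]
          ring
        have htval : ∀ l : Fin (n - (i:ℕ)), (∑' k : ℕ,
            ((x' l) ^ k / ∏ p ∈ Finset.univ.erase l, (x' l - x' p)) *
              ((1 - t ^ (k + 1)) *
                ((y j ^ (k + 1) - (y j)⁻¹ ^ (k + 1)) / (y j - (y j)⁻¹)))) =
            (∏ p ∈ Finset.univ.erase l, (x' l - x' p))⁻¹ *
              ((1 - t) * (1 - t * (x' l) ^ 2) / ((1 - x' l * y j) * (1 - t * (x' l * y j)) *
                (1 - x' l * (y j)⁻¹) * (1 - t * (x' l * (y j)⁻¹)))) := by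
          intro l
          refine Eq.trans (tsum_congr fun k => ?_) ((hrowSum l).mul_left
            (∏ p ∈ Finset.univ.erase l, (x' l - x' p))⁻¹).tsum_eq
          rw [div_eq_mul_inv]
          ring
        refine Eq.trans (tsum_congr hkey) ?_
        rw [Summable.tsum_finsetSum (fun l _ => hsummable l)]
        rw [Finset.sum_congr rfl (fun l _ => htval l)]
        have hfil : ∀ l' ∈ Finset.univ, L i l' * M l' j ≠ 0 → (i:ℕ) ≤ (l':ℕ) := by
          intro l' _ hne
          by_contra hc
          apply hne
          simp only [hL, Matrix.of_apply, if_neg him, if_neg hc, zero_mul]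
        rw [← Finset.sum_filter_of_ne hfil]
        refine Finset.sum_nbij' (i := fun a : Fin (n - (i:ℕ)) =>
            (⟨(i:ℕ) + (a:ℕ), by have := a.isLt; omega⟩ : Fin n))
          (j := fun l' : Fin n => (⟨(l':ℕ) - (i:ℕ), by have := l'.isLt; omega⟩ : Fin (n - (i:ℕ))))
          ?_ ?_ ?_ ?_ ?_
        · intro a _
          simp only [Finset.mem_filter, Finset.mem_univ, true_and]
          omega
        · intro l' _
          exact Finset.mem_univ _
        · intro a _
          refine Fin.ext ?_
          simp only
          omega
        · intro l' hl'
          rw [Finset.mem_filter] at hl'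
          refine Fin.ext ?_
          simp only
          omega
        · intro a _
          have hprod : (∏ p ∈ Finset.filter
              (fun p : Fin n => (i:ℕ) ≤ (p:ℕ) ∧ p ≠ (⟨(i:ℕ) + (a:ℕ), by have := a.isLt; omega⟩ : Fin n))
              Finset.univ, (x (⟨(i:ℕ) + (a:ℕ), by have := a.isLt; omega⟩ : Fin n) - x p)) =
              ∏ p ∈ Finset.univ.erase a, (x' a - x' p) := by
            refine Finset.prod_nbij' (i := fun p : Fin n =>
                (⟨(p:ℕ) - (i:ℕ), by have := p.isLt; omega⟩ : Fin (n - (i:ℕ))))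
              (j := fun b : Fin (n - (i:ℕ)) =>
                (⟨(i:ℕ) + (b:ℕ), by have := b.isLt; omega⟩ : Fin n)) ?_ ?_ ?_ ?_ ?_
            · intro p hp
              rw [Finset.mem_filter] at hp
              obtain ⟨-, hp1, hp2⟩ := hp
              refine Finset.mem_erase.mpr ⟨?_, Finset.mem_univ _⟩
              intro hcon
              apply hp2
              have hval : (p:ℕ) - (i:ℕ) = (a:ℕ) := congrArg Fin.val hcon
              refine Fin.ext ?_
              show (p:ℕ) = (i:ℕ) + (a:ℕ)
              omega
            · intro b hb
              rw [Finset.mem_erase] at hb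
              refine Finset.mem_filter.mpr ⟨Finset.mem_univ _, by simp only; omega, ?_⟩
              intro hcon
              apply hb.1
              rw [Fin.mk.injEq] at hcon
              refine Fin.ext ?_
              omega
            · intro p hp
              rw [Finset.mem_filter] at hp
              refine Fin.ext ?_
              simp only
              omega
            · intro b _
              refine Fin.ext ?_
              simp only
              omega
            · intro p hp
              rw [Finset.mem_filter] at hp
              rw [hx']
              simp only
              congr 2
              refine Fin.ext ?_
              simp only
              omega
          simp only [hL, hM, hdd, Matrix.of_apply, if_neg him,
            if_pos (by simp only; omega : (i:ℕ) ≤ ((⟨(i:ℕ) + (a:ℕ), by have := a.isLt; omega⟩ : Fin n) : ℕ)),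
            if_neg (by simp only; omega : ¬ ((((⟨(i:ℕ) + (a:ℕ), by have := a.isLt; omega⟩ : Fin n)) : ℕ) < m))]
          rw [hprod]
          congr 1
          show _ = (1 - t * x' a ^ 2) *
            ((1 - t) / ((1 - x' a * y j) * (1 - t * (x' a * y j)) * (1 - x' a * (y j)⁻¹) *
              (1 - t * (x' a * (y j)⁻¹))))
          ring
    rw [hULM, Matrix.det_mul, hdetL, hdetM]
    field_simp
  · -- degenerate case: both sides vanish
    push_neg at hinj
    obtain ⟨i, j, hmi, hmj, hxij, hij⟩ := hinj
    have hdet : K.det = 0 := by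
      refine Matrix.det_zero_of_row_eq hij ?_
      funext j'
      show (Matrix.of _) i j' = (Matrix.of _) j j'
      simp only [Matrix.of_apply]
      rw [hxij]
    have hVz : V = 0 := by
      rcases lt_or_gt_of_ne hij with hlt | hgt
      · refine Finset.prod_eq_zero (Finset.mem_univ i) ?_
        refine Finset.prod_eq_zero (Finset.mem_Ioi.mpr hlt) ?_
        rw [if_pos hmi, sub_eq_zero]
        exact hxij
      · refine Finset.prod_eq_zero (Finset.mem_univ j) ?_
        refine Finset.prod_eq_zero (Finset.mem_Ioi.mpr hgt) ?_
        rw [if_pos hmj, sub_eq_zero]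
        exact hxij.symm
    rw [hdet, hVz, zero_div, zero_mul]
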